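/- Let K be a field, n a natural number, and σ, π permutations of Fin n. On Fin n → K define the inner isotope multiplications (x •_σ y)(i) = x(σ(i))·y(σ(i)) and (x •_π y)(i) = x(π(i))·y(π(i)). Then there exists a K-linear bijection f of Fin n → K with f(x •_σ y) = f(x) •_π f(y) for all x, y if and only if σ and π are conjugate in the symmetric group of Fin n. -/

import Mathlib

theorem Equiv.Perm.apply_inv_self {α : Type*} (f : Equiv.Perm α) (x : α) : f (f⁻¹ x) = x :=
  f.apply_symm_apply x

theorem Equiv.Perm.inv_apply_self {α : Type*} (f : Equiv.Perm α) (x : α) : f⁻¹ (f x) = x :=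
  f.symm_apply_apply x

/-- Two inner isotopes `(Fin n → K, •_σ)` and `(Fin n → K, •_π)` of the coordinatewise
product algebra are isomorphic (via a K-linear multiplicative bijection) iff `σ` and `π`
are conjugate in the symmetric group. -/
theorem stmt_10 {K : Type*} [Field K] (n : ℕ) (σ π : Equiv.Perm (Fin n)) :
    (∃ f : (Fin n → K) ≃ₗ[K] (Fin n → K),
      ∀ x y : Fin n → K,
        f (fun i => x (σ i) * y (σ i)) = fun i => f x (π i) * f y (π i)) ↔
    IsConj σ π := by
  constructor
  · rintro ⟨f, hf⟩
    set v : Fin n → Fin n → K := fun i => f (Pi.single i 1) with hv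
    have hvne : ∀ i, v i ≠ 0 := by
      intro i h
      have h1 : (Pi.single i 1 : Fin n → K) = 0 :=
        f.injective (a₁ := Pi.single i 1) (a₂ := 0) (by rw [map_zero]; exact h)
      have := congrFun h1 i
      simp at this
    -- orthogonality
    have horth : ∀ i j, i ≠ j → ∀ m, v i m * v j m = 0 := by
      intro i j hij m
      have h0 : (fun k => (Pi.single i 1 : Fin n → K) (σ k) *
          (Pi.single j 1 : Fin n → K) (σ k)) = (0 : Fin n → K) := by
        funext k
        simp only [Pi.single_apply, Pi.zero_apply]
        by_cases h1 : σ k = i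
        · have h2 : ¬ σ k = j := fun h2 => hij (h1.symm.trans h2)
          rw [if_pos h1, if_neg h2, mul_zero]
        · rw [if_neg h1, zero_mul]
      have := hf (Pi.single i 1) (Pi.single j 1)
      rw [h0, map_zero] at this
      have h2 := congrFun this.symm (π⁻¹ m)
      simpa [Equiv.Perm.apply_inv_self] using h2
    -- squaring
    have hsq : ∀ i k, v (σ⁻¹ i) k = v i (π k) * v i (π k) := by
      intro i k
      have h0 : (fun k => (Pi.single i 1 : Fin n → K) (σ k) *
          (Pi.single i 1 : Fin n → K) (σ k)) = (Pi.single (σ⁻¹ i) 1 : Fin n → K) := by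
        funext k
        simp only [Pi.single_apply]
        by_cases h : σ k = i
        · have hk : k = σ⁻¹ i := by rw [← h, Equiv.Perm.inv_apply_self]
          simp [h, hk]
        · have hk : ¬ k = σ⁻¹ i := by
            intro hkk; exact h (by rw [hkk, Equiv.Perm.apply_inv_self])
          simp [h, hk]; exact hk
      have := hf (Pi.single i 1) (Pi.single i 1)
      rw [h0] at this
      exact congrFun this k
    have hex : ∀ i, ∃ m, v i m ≠ 0 := by
      intro i
      by_contra h
      push_neg at h
      exact hvne i (funext fun m => by simpa using h m)
    choose a ha using hex
    have hinj : Function.Injective a := by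
      intro i j hij
      by_contra hne
      have := horth i j hne (a i)
      rcases mul_eq_zero.mp this with h | h
      · exact ha i h
      · rw [hij] at h; exact ha j h
    have hbij : Function.Bijective a := Finite.injective_iff_bijective.mp hinj
    have hzero : ∀ i m, m ≠ a i → v i m = 0 := by
      intro i m hm
      obtain ⟨j, rfl⟩ := hbij.2 m
      have hij : i ≠ j := fun h => hm (by rw [h])
      rcases mul_eq_zero.mp (horth i j hij (a j)) with h | h
      · exact h
      · exact absurd h (ha j)
    have key : ∀ i, a (σ⁻¹ i) = π⁻¹ (a i) := by
      intro i
      by_contra hne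
      have h1 : v (σ⁻¹ i) (π⁻¹ (a i)) = 0 := hzero _ _ (fun h => hne h.symm)
      rw [hsq i (π⁻¹ (a i)), Equiv.Perm.apply_inv_self] at h1
      rcases mul_eq_zero.mp h1 with h | h <;> exact ha i h
    let τ : Equiv.Perm (Fin n) := Equiv.ofBijective a hbij
    rw [isConj_iff]
    refine ⟨τ, Equiv.ext fun x => ?_⟩
    have h2 : ∀ y, π (a y) = a (σ y) := by
      intro y
      have := key (σ y)
      rw [Equiv.Perm.inv_apply_self] at this
      rw [this, Equiv.Perm.apply_inv_self]
    have h3 : a (τ⁻¹ x) = x := Equiv.Perm.apply_inv_self τ x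
    show τ (σ (τ⁻¹ x)) = π x
    calc τ (σ (τ⁻¹ x)) = a (σ (τ⁻¹ x)) := rfl
      _ = π (a (τ⁻¹ x)) := (h2 (τ⁻¹ x)).symm
      _ = π x := by rw [h3]
  · intro h
    obtain ⟨c, hc⟩ := isConj_iff.mp h
    have key : ∀ i, σ (c⁻¹ i) = c⁻¹ (π i) := by
      intro i
      have h1 : (c * σ * c⁻¹) i = π i := by rw [hc]
      simp only [Equiv.Perm.mul_apply] at h1
      rw [← h1, Equiv.Perm.inv_apply_self]
    refine ⟨{ toFun := fun x i => x (c⁻¹ i),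
              invFun := fun x i => x (c i),
              map_add' := fun _ _ => rfl,
              map_smul' := fun _ _ => rfl,
              left_inv := fun x => funext fun i => by
                simp [Equiv.Perm.inv_apply_self],
              right_inv := fun x => funext fun i => by
                simp [Equiv.Perm.apply_inv_self] }, ?_⟩
    intro x y
    funext i
    show x (σ (c⁻¹ i)) * y (σ (c⁻¹ i)) = x (c⁻¹ (π i)) * y (c⁻¹ (π i))
    rw [key i]
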